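/- Let p be an odd prime. For ε ∈ {−1,1}, the number of pairs (b,c) mod p with ((b^2+4c)/p) = ε and ((−c)/p) = ε is at most (p−1)^2/4 − ε(p−1)/2. -/

import Mathlib

open Finset

section Aux

variable {p : ℕ} [Fact p.Prime]

local notation "χ" => quadraticChar (ZMod p)

lemma myHF (hodd : Odd p) : ringChar (ZMod p) ≠ 2 := by
  rw [ZMod.ringChar_zmod_n]
  rintro rfl
  exact (Nat.not_odd_iff_even.mpr (by decide)) hodd

/-- shift sum is zero -/
lemma my_shift_sum (hodd : Odd p) (a : ZMod p) : ∑ t : ZMod p, χ (t + a) = 0 :=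
  (Fintype.sum_equiv (Equiv.addRight a) (fun t => χ (t + a)) χ (fun _ => rfl)).trans
    (quadraticChar_sum_zero (myHF hodd))

lemma my_neg_sum (hodd : Odd p) : ∑ c : ZMod p, χ (-c) = 0 :=
  (Fintype.sum_equiv (Equiv.neg (ZMod p)) (fun c => χ (-c)) χ (fun _ => rfl)).trans
    (quadraticChar_sum_zero (myHF hodd))

lemma my_card_sqrts (hodd : Odd p) (t : ZMod p) :
    (((univ : Finset (ZMod p)).filter (fun b => b ^ 2 = t)).card : ℤ) = χ t + 1 := by
  have h := quadraticChar_card_sqrts (myHF hodd) t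
  rw [← h]
  congr 1
  rw [Set.toFinset_setOf]

/-- key sum : ∑ b, χ(b²+a) = -1 for a ≠ 0 -/
lemma my_key_sum (hodd : Odd p) {a : ZMod p} (ha : a ≠ 0) :
    ∑ b : ZMod p, χ (b ^ 2 + a) = -1 := by
  have hstep : ∑ b : ZMod p, χ (b ^ 2 + a)
      = ∑ t : ZMod p, (((univ : Finset (ZMod p)).filter (fun b => b ^ 2 = t)).card : ℤ)
          * χ (t + a) := by
    rw [← Finset.sum_fiberwise' univ (fun b : ZMod p => b ^ 2) (fun t => χ (t + a))]
    exact Finset.sum_congr rfl fun t _ => by rw [Finset.sum_const, nsmul_eq_mul]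
  rw [hstep]
  have hstep2 : ∑ t : ZMod p, (((univ : Finset (ZMod p)).filter (fun b => b ^ 2 = t)).card : ℤ)
      * χ (t + a) = ∑ t : ZMod p, (χ t * χ (t + a) + χ (t + a)) := by
    refine Finset.sum_congr rfl fun t _ => ?_
    rw [my_card_sqrts hodd t]; ring
  rw [hstep2, Finset.sum_add_distrib, my_shift_sum hodd a, add_zero]
  -- J = ∑ t, χ t * χ (t + a) = -1
  have h0 : ∑ t : ZMod p, χ t * χ (t + a)
      = ∑ t ∈ (univ : Finset (ZMod p)).erase 0, χ t * χ (t + a) := by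
    rw [← Finset.add_sum_erase _ _ (mem_univ (0 : ZMod p))]
    simp
  rw [h0]
  have h1 : ∀ t ∈ (univ : Finset (ZMod p)).erase 0,
      χ t * χ (t + a) = χ (1 + a * t⁻¹) := by
    intro t ht
    have ht0 : t ≠ 0 := Finset.ne_of_mem_erase ht
    have : t + a = t * (1 + a * t⁻¹) := by field_simp
    rw [this, map_mul, ← mul_assoc, ← pow_two, quadraticChar_sq_one ht0, one_mul]
  rw [Finset.sum_congr rfl h1]
  have h2 : ∑ t ∈ (univ : Finset (ZMod p)).erase 0, χ (1 + a * t⁻¹)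
      = ∑ s ∈ (univ : Finset (ZMod p)).erase 0, χ (1 + s) := by
    refine Finset.sum_nbij' (fun t => a * t⁻¹) (fun s => a * s⁻¹) ?_ ?_ ?_ ?_ ?_
    · intro t ht
      have ht0 : t ≠ 0 := Finset.ne_of_mem_erase ht
      exact Finset.mem_erase.mpr ⟨mul_ne_zero ha (inv_ne_zero ht0), mem_univ _⟩
    · intro s hs
      have hs0 : s ≠ 0 := Finset.ne_of_mem_erase hs
      exact Finset.mem_erase.mpr ⟨mul_ne_zero ha (inv_ne_zero hs0), mem_univ _⟩
    · intro t ht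
      have ht0 : t ≠ 0 := Finset.ne_of_mem_erase ht
      field_simp
    · intro s hs
      have hs0 : s ≠ 0 := Finset.ne_of_mem_erase hs
      field_simp
    · intro t ht; rfl
  rw [h2]
  have h4 : χ (1 + (0 : ZMod p)) + ∑ s ∈ (univ : Finset (ZMod p)).erase 0, χ (1 + s)
      = ∑ s : ZMod p, χ (1 + s) :=
    Finset.add_sum_erase (univ : Finset (ZMod p)) (fun s => χ (1 + s)) (mem_univ 0)
  have h5 : ∑ s : ZMod p, χ (1 + s) = 0 := by
    calc ∑ s : ZMod p, χ (1 + s) = ∑ s : ZMod p, χ (s + 1) :=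
          Finset.sum_congr rfl fun s _ => by rw [add_comm]
      _ = 0 := my_shift_sum hodd 1
  rw [h5, add_zero, map_one] at h4
  linarith [h4]

lemma my_sq_sum (hodd : Odd p) (a : ZMod p) :
    ∑ b : ZMod p, (χ (b ^ 2 + a)) ^ 2 = (p : ℤ) - 1 - χ (-a) := by
  have hpt : ∀ b : ZMod p, (χ (b ^ 2 + a)) ^ 2 = 1 - (if b ^ 2 = -a then (1 : ℤ) else 0) := by
    intro b
    by_cases h : b ^ 2 = -a
    · have : b ^ 2 + a = 0 := by rw [h]; ring
      simp [this, h]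
    · have : b ^ 2 + a ≠ 0 := fun hc => h (by linear_combination (norm := ring_nf) hc)
      rw [quadraticChar_sq_one this, if_neg h]
      ring
  rw [Finset.sum_congr rfl fun b _ => hpt b, Finset.sum_sub_distrib, Finset.sum_const,
    Finset.sum_boole, my_card_sqrts hodd (-a)]
  simp only [Finset.card_univ, ZMod.card, smul_eq_mul, mul_one]
  ring

end Aux

theorem stmt_3 (p : ℕ) [Fact p.Prime] (hodd : Odd p) (ε : ℤ) (hε : ε = -1 ∨ ε = 1) :
    (((Finset.univ : Finset (ZMod p × ZMod p)).filter
      (fun bc => quadraticChar (ZMod p) (bc.1 ^ 2 + 4 * bc.2) = ε ∧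
        quadraticChar (ZMod p) (-bc.2) = ε)).card : ℤ)
      ≤ ((p : ℤ) - 1) ^ 2 / 4 - ε * ((p : ℤ) - 1) / 2 := by
  have hF : ringChar (ZMod p) ≠ 2 := myHF hodd
  have h2 : (2 : ZMod p) ≠ 0 := Ring.two_ne_zero hF
  have h4 : (4 : ZMod p) ≠ 0 := by
    have h42 : (4 : ZMod p) = 2 * 2 := by norm_num
    rw [h42]; exact mul_ne_zero h2 h2
  have hε2 : ε ^ 2 = 1 := by rcases hε with h | h <;> simp [h]
  set χ := quadraticChar (ZMod p) with hχ
  -- pointwise indicator identity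
  have pointwise : ∀ bc : ZMod p × ZMod p,
      (if (χ (bc.1 ^ 2 + 4 * bc.2) = ε ∧ χ (-bc.2) = ε) then (4 : ℤ) else 0)
        = (ε * χ (bc.1 ^ 2 + 4 * bc.2) + χ (bc.1 ^ 2 + 4 * bc.2) ^ 2) *
          (ε * χ (-bc.2) + χ (-bc.2) ^ 2) := by
    intro bc
    rcases quadraticChar_isQuadratic (ZMod p) (bc.1 ^ 2 + 4 * bc.2) with hx | hx | hx <;>
      rcases quadraticChar_isQuadratic (ZMod p) (-bc.2) with hy | hy | hy <;>
      rcases hε with hε1 | hε1 <;>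
      subst hε1 <;>
      simp [hχ, hx, hy]
  have hN : 4 * ((((Finset.univ : Finset (ZMod p × ZMod p)).filter
      (fun bc => χ (bc.1 ^ 2 + 4 * bc.2) = ε ∧ χ (-bc.2) = ε)).card : ℤ))
      = ((p : ℤ) - 1) ^ 2 - 2 * ε * ((p : ℤ) - 1) := by
    have step1 : 4 * ((((Finset.univ : Finset (ZMod p × ZMod p)).filter
        (fun bc => χ (bc.1 ^ 2 + 4 * bc.2) = ε ∧ χ (-bc.2) = ε)).card : ℤ))
        = ∑ bc : ZMod p × ZMod p,
            (ε * χ (bc.1 ^ 2 + 4 * bc.2) + χ (bc.1 ^ 2 + 4 * bc.2) ^ 2) *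
            (ε * χ (-bc.2) + χ (-bc.2) ^ 2) := by
      rw [← Finset.sum_congr rfl (fun bc _ => pointwise bc), ← Finset.sum_filter,
        Finset.sum_const, nsmul_eq_mul]
      ring
    rw [step1]
    have step2 : ∑ bc : ZMod p × ZMod p,
        (ε * χ (bc.1 ^ 2 + 4 * bc.2) + χ (bc.1 ^ 2 + 4 * bc.2) ^ 2) *
            (ε * χ (-bc.2) + χ (-bc.2) ^ 2)
        = ∑ c : ZMod p, ∑ b : ZMod p,
            (ε * χ (b ^ 2 + 4 * c) + χ (b ^ 2 + 4 * c) ^ 2) * (ε * χ (-c) + χ (-c) ^ 2) := by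
      rw [Fintype.sum_prod_type]
      exact Finset.sum_comm
    rw [step2]
    have hAB : ∀ c : ZMod p, ∑ b : ZMod p,
        (ε * χ (b ^ 2 + 4 * c) + χ (b ^ 2 + 4 * c) ^ 2) * (ε * χ (-c) + χ (-c) ^ 2)
        = ε * ((p : ℤ) - 1) * χ (-c) - 2 * χ (-c) + ((p : ℤ) - 1 - 2 * ε) * χ (-c) ^ 2 := by
      intro c
      rw [← Finset.sum_mul]
      by_cases hc : c = 0
      · subst hc; simp [hχ]
      · have h4c : (4 : ZMod p) * c ≠ 0 := mul_ne_zero h4 hc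
        have hA : ∑ b : ZMod p, χ (b ^ 2 + 4 * c) = -1 := my_key_sum hodd h4c
        have hB : ∑ b : ZMod p, (χ (b ^ 2 + 4 * c)) ^ 2 = (p : ℤ) - 1 - χ (-(4 * c)) :=
          my_sq_sum hodd (4 * c)
        have hneg4 : χ (-(4 * c)) = χ (-c) := by
          have he : (-(4 * c) : ZMod p) = (2 : ZMod p) ^ 2 * (-c) := by ring
          rw [he, map_mul, quadraticChar_sq_one' h2, one_mul]
        have hsum : ∑ b : ZMod p, (ε * χ (b ^ 2 + 4 * c) + χ (b ^ 2 + 4 * c) ^ 2)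
            = ε * (-1) + ((p : ℤ) - 1 - χ (-c)) := by
          rw [Finset.sum_add_distrib, ← Finset.mul_sum, hA, hB, hneg4]
        rw [hsum]
        have hx2 : χ (-c) ^ 2 = 1 := quadraticChar_sq_one (neg_ne_zero.mpr hc)
        linear_combination (-(χ (-c))) * hx2 + (-(χ (-c))) * hε2
    rw [Finset.sum_congr rfl (fun c _ => hAB c)]
    have hQ : ∑ c : ZMod p, χ (-c) ^ 2 = (p : ℤ) - 1 := by
      have hpt : ∀ c : ZMod p, χ (-c) ^ 2 = 1 - (if c = 0 then (1 : ℤ) else 0) := by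
        intro c
        by_cases h : c = 0
        · simp [h, hχ]
        · rw [quadraticChar_sq_one (neg_ne_zero.mpr h), if_neg h]; ring
      rw [Finset.sum_congr rfl (fun c _ => hpt c), Finset.sum_sub_distrib, Finset.sum_const,
        Finset.sum_ite_eq' Finset.univ (0 : ZMod p) (fun _ => (1 : ℤ))]
      simp [Finset.card_univ, ZMod.card]
    have hS := my_neg_sum (p := p) hodd
    rw [show (∑ c : ZMod p, (ε * ((p : ℤ) - 1) * χ (-c) - 2 * χ (-c)
        + ((p : ℤ) - 1 - 2 * ε) * χ (-c) ^ 2))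
        = ε * ((p : ℤ) - 1) * (∑ c : ZMod p, χ (-c)) - 2 * (∑ c : ZMod p, χ (-c))
          + ((p : ℤ) - 1 - 2 * ε) * (∑ c : ZMod p, χ (-c) ^ 2) by
      rw [Finset.mul_sum, Finset.mul_sum, Finset.mul_sum, ← Finset.sum_sub_distrib,
        ← Finset.sum_add_distrib]]
    rw [hS, hQ]
    ring
  obtain ⟨k, hk⟩ := hodd
  have hp1 : (p : ℤ) - 1 = 2 * (k : ℤ) := by rw [hk]; push_cast; ring
  rw [hp1] at hN ⊢
  have hsq : ((2 : ℤ) * (k : ℤ)) ^ 2 = 4 * ((k : ℤ) * (k : ℤ)) := by ring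
  rw [hsq] at hN ⊢
  rcases hε with h | h <;> subst h <;> omega
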